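/- Let p, q be coprime integers with 1 < p < q and let r, s be coprime integers with 1 < r < s, and suppose r < p. Regard Δ_{p,q}(X) and Δ_{r,s}(X) as elements of ℤ[[X]]; since Δ_{r,s} has constant coefficient 1 it is a unit in ℤ[[X]]. Then the formal power series F = Δ_{p,q}(X)^2 · Δ_{r,s}(X)^{−1} satisfies F ≡ 1 − X − X^r (mod X^{r+1}); that is, the coefficient of X^0 in F is 1, the coefficient of X^1 is −1, the coefficient of X^i is 0 for 1 < i < r, and the coefficient of X^r is −1. -/

import Mathlib

open Polynomial

theorem two_Tpq_minus_Trs_alexander_obstruction (p q r s : ℕ)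
    (hp : 1 < p) (hpq : p < q) (hcop : Nat.Coprime p q)
    (hr : 1 < r) (hrs : r < s) (hcop' : Nat.Coprime r s) (hrp : r < p)
    (Δpq Δrs : ℤ[X])
    (hΔpq : Δpq * ((X ^ p - 1) * (X ^ q - 1)) = (X ^ (p * q) - 1) * (X - 1))
    (hΔrs : Δrs * ((X ^ r - 1) * (X ^ s - 1)) = (X ^ (r * s) - 1) * (X - 1))
    (F : PowerSeries ℤ)
    (hF : F = (Δpq : PowerSeries ℤ) ^ 2 * Ring.inverse (Δrs : PowerSeries ℤ)) :
    PowerSeries.coeff 0 F = 1 ∧ PowerSeries.coeff 1 F = -1 ∧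
    (∀ i : ℕ, 1 < i → i < r → PowerSeries.coeff i F = 0) ∧
    PowerSeries.coeff r F = -1 := by
  have hr0 : r ≠ 0 := by omega
  have hs0 : s ≠ 0 := by omega
  have hrs0 : r * s ≠ 0 := Nat.mul_ne_zero hr0 hs0
  set Y : PowerSeries ℤ := PowerSeries.X with hY
  set P : PowerSeries ℤ := (Δpq : PowerSeries ℤ) with hP
  set S : PowerSeries ℤ := (Δrs : PowerSeries ℤ) with hS
  set d : PowerSeries ℤ := Y ^ (r + 1) with hd
  -- cast the polynomial identities to power series
  have e1 : P * ((Y ^ p - 1) * (Y ^ q - 1)) = (Y ^ (p * q) - 1) * (Y - 1) := by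
    have := congrArg (Polynomial.coeToPowerSeries.ringHom (R := ℤ)) hΔpq
    simpa [hY, hP] using this
  have e2 : S * ((Y ^ r - 1) * (Y ^ s - 1)) = (Y ^ (r * s) - 1) * (Y - 1) := by
    have := congrArg (Polynomial.coeToPowerSeries.ringHom (R := ℤ)) hΔrs
    simpa [hY, hS] using this
  -- exponent bounds
  have hpq1 : r + 1 ≤ p * q := le_trans (by omega) (Nat.le_mul_of_pos_right p (by omega))
  have hrs1 : r + 1 ≤ r * s := by
    calc r + 1 ≤ s := by omega
    _ ≤ r * s := Nat.le_mul_of_pos_left s (by omega)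
  have hXp : d ∣ Y ^ p := pow_dvd_pow Y (by omega)
  have hXq : d ∣ Y ^ q := pow_dvd_pow Y (by omega)
  have hXpq : d ∣ Y ^ (p * q) := pow_dvd_pow Y hpq1
  have hXs : d ∣ Y ^ s := pow_dvd_pow Y (by omega)
  have hXrs : d ∣ Y ^ (r * s) := pow_dvd_pow Y hrs1
  -- congruences
  have hA : d ∣ (Y ^ p - 1) * (Y ^ q - 1) - 1 := by
    have h : (Y ^ p - 1) * (Y ^ q - 1) - 1 = Y ^ p * (Y ^ q - 1) - Y ^ q := by ring
    rw [h]
    exact dvd_sub (hXp.mul_right _) hXq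
  have hC : d ∣ (Y ^ r - 1) * (Y ^ s - 1) - (1 - Y ^ r) := by
    have h : (Y ^ r - 1) * (Y ^ s - 1) - (1 - Y ^ r) = Y ^ s * (Y ^ r - 1) := by ring
    rw [h]
    exact hXs.mul_right _
  have hD : d ∣ (Y ^ (r * s) - 1) * (Y - 1) - (1 - Y) := by
    have h : (Y ^ (r * s) - 1) * (Y - 1) - (1 - Y) = Y ^ (r * s) * (Y - 1) := by ring
    rw [h]
    exact hXrs.mul_right _
  -- P ≡ 1 - Y mod d
  have hPc : d ∣ P - (1 - Y) := by
    have h : P - (1 - Y) =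
        ((Y ^ (p * q) - 1) * (Y - 1) - (1 - Y)) - P * ((Y ^ p - 1) * (Y ^ q - 1) - 1) := by
      linear_combination e1
    have hB : d ∣ (Y ^ (p * q) - 1) * (Y - 1) - (1 - Y) := by
      have h2 : (Y ^ (p * q) - 1) * (Y - 1) - (1 - Y) = Y ^ (p * q) * (Y - 1) := by ring
      rw [h2]
      exact hXpq.mul_right _
    rw [h]
    exact dvd_sub hB (hA.mul_left _)
  -- units
  have hSc : PowerSeries.constantCoeff S = 1 := by
    have h := congrArg (PowerSeries.constantCoeff (R := ℤ)) e2
    simp only [map_mul, map_sub, map_pow, map_one, hY, PowerSeries.constantCoeff_X,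
      zero_pow hr0, zero_pow hs0, zero_pow hrs0] at h
    norm_num at h
    exact h
  have hSu : IsUnit S := by
    rw [PowerSeries.isUnit_iff_constantCoeff, hSc]
    exact isUnit_one
  have hCu : IsUnit ((Y ^ r - 1) * (Y ^ s - 1)) := by
    rw [PowerSeries.isUnit_iff_constantCoeff]
    have h : PowerSeries.constantCoeff ((Y ^ r - 1) * (Y ^ s - 1)) = 1 := by
      simp only [map_mul, map_sub, map_pow, map_one, hY, PowerSeries.constantCoeff_X,
        zero_pow hr0, zero_pow hs0]
      norm_num
    rw [h]
    exact isUnit_one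
  -- key divisibility
  have key : d ∣ (P ^ 2 - (1 - Y - Y ^ r) * S) * ((Y ^ r - 1) * (Y ^ s - 1)) := by
    have h1 : d ∣ P ^ 2 - (1 - Y) ^ 2 := by
      have h : P ^ 2 - (1 - Y) ^ 2 = (P - (1 - Y)) * (P + (1 - Y)) := by ring
      rw [h]; exact hPc.mul_right _
    have expand : (P ^ 2 - (1 - Y - Y ^ r) * S) * ((Y ^ r - 1) * (Y ^ s - 1)) =
        (P ^ 2 - (1 - Y) ^ 2) * ((Y ^ r - 1) * (Y ^ s - 1))
        + (1 - Y) ^ 2 * ((Y ^ r - 1) * (Y ^ s - 1) - (1 - Y ^ r))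
        - (1 - Y - Y ^ r) * ((Y ^ (r * s) - 1) * (Y - 1) - (1 - Y))
        + Y ^ (r + 1) * (1 - Y) := by
      linear_combination (-(1 - Y - Y ^ r)) * e2
    rw [expand, hd]
    exact dvd_add (dvd_sub (dvd_add (h1.mul_right _) (hC.mul_left _)) (hD.mul_left _))
      (dvd_mul_right _ _)
  have key2 : d ∣ P ^ 2 - (1 - Y - Y ^ r) * S := (hCu.dvd_mul_right).mp key
  -- F - G
  have hFG : d ∣ F - (1 - Y - Y ^ r) := by
    have h : F - (1 - Y - Y ^ r) = (P ^ 2 - (1 - Y - Y ^ r) * S) * Ring.inverse S := by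
      rw [hF, sub_mul, mul_assoc, Ring.mul_inverse_cancel S hSu, mul_one]
    rw [h]
    exact key2.mul_right _
  have hcoe : ∀ n, n ≤ r → PowerSeries.coeff n F =
      PowerSeries.coeff n (1 - Y - Y ^ r) := by
    intro n hn
    have h2 := (PowerSeries.X_pow_dvd_iff.mp (hd ▸ hFG)) n (by omega)
    rw [map_sub, sub_eq_zero] at h2
    exact h2
  have hGc : ∀ n : ℕ, PowerSeries.coeff n (1 - Y - Y ^ r) =
      (if n = 0 then 1 else 0) - (if n = 1 then 1 else 0) - (if n = r then 1 else 0) := by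
    intro n
    simp [hY, PowerSeries.coeff_one, PowerSeries.coeff_X_pow, PowerSeries.coeff_X]
  refine ⟨?_, ?_, ?_, ?_⟩
  · rw [hcoe 0 (by omega), hGc]
    split_ifs <;> first | omega | exact absurd ‹False› not_false
  · rw [hcoe 1 (by omega), hGc]
    split_ifs <;> first | omega | exact absurd ‹False› not_false
  · intro i h1 h2
    rw [hcoe i (by omega), hGc]
    split_ifs <;> first | omega | exact absurd ‹False› not_false
  · rw [hcoe r (by omega), hGc]
    split_ifs <;> first | omega | exact absurd ‹False› not_false
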